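/- Let (Ω, F, P) be a probability space, let (F_t)_{t≥1} be a filtration, and let (u_t)_{t≥1} be an adapted sequence of integrable random variables with u_t ≥ 0 for all t. Suppose Σ_{t=1}^{∞} E[ max( E[u_{t+1} − u_t | F_t], 0 ) ] < ∞, i.e., the sum over t of the expectations of the positive part of the conditional expectation E[u_{t+1} − u_t | F_t] is finite. Then u_t converges almost surely to a finite limit, and moreover Σ_{t=1}^{∞} | E[u_{t+1} − u_t | F_t] | < ∞ almost surely. -/

import Mathlib

open MeasureTheory Filter
open scoped BigOperators ENNReal

theorem stmt_7 {Ω : Type*} {m : MeasurableSpace Ω} (μ : Measure Ω)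
    [IsProbabilityMeasure μ] (ℱ : Filtration ℕ m)
    (u : ℕ → Ω → ℝ)
    (hadapted : Adapted ℱ u)
    (hint : ∀ t, Integrable (u t) μ)
    (hpos : ∀ t ω, 0 ≤ u t ω)
    (hqm : Summable fun t => ∫ ω, max ((μ[u (t + 1) - u t|ℱ t]) ω) 0 ∂μ) :
    ∀ᵐ ω ∂μ,
      (∃ l : ℝ, Tendsto (fun t => u t ω) atTop (nhds l)) ∧
      Summable (fun t => |(μ[u (t + 1) - u t|ℱ t]) ω|) := by
  set d : ℕ → Ω → ℝ := fun t => μ[u (t + 1) - u t|ℱ t] with hd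
  have hdint : ∀ t, Integrable (d t) μ := fun t => integrable_condExp
  have hdmeas : ∀ t, StronglyMeasurable[ℱ t] (d t) := fun t => stronglyMeasurable_condExp
  -- integral of d t
  have hdi : ∀ t, ∫ ω, d t ω ∂μ = (∫ ω, u (t+1) ω ∂μ) - ∫ ω, u t ω ∂μ := by
    intro t
    rw [hd]
    rw [integral_condExp (ℱ.le t)]
    exact integral_sub (hint (t+1)) (hint t)
  set mt : ℕ → ℝ := fun t => ∫ ω, max (d t ω) 0 ∂μ with hmt
  have hmt_nonneg : ∀ t, 0 ≤ mt t := fun t => integral_nonneg fun ω => le_max_right _ _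
  have hmax_int : ∀ t, Integrable (fun ω => max (d t ω) 0) μ := fun t => (hdint t).pos_part
  -- Summability of t ↦ ∫ |d t|
  have habs_eq : ∀ t, ∫ ω, |d t ω| ∂μ = 2 * mt t - ∫ ω, d t ω ∂μ := by
    intro t
    have h : ∀ ω, |d t ω| = 2 * max (d t ω) 0 - d t ω := by
      intro ω
      rcases le_or_gt (d t ω) 0 with h | h
      · rw [abs_of_nonpos h, max_eq_right h]; ring
      · rw [abs_of_pos h, max_eq_left h.le]; ring
    simp_rw [h]
    rw [integral_sub ((hmax_int t).const_mul 2) (hdint t), integral_const_mul]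
  have hIsummable : Summable fun t => ∫ ω, |d t ω| ∂μ := by
    apply summable_of_sum_range_le (c := 2 * (∑' t, mt t) + ∫ ω, u 0 ω ∂μ)
      (fun t => integral_nonneg fun ω => abs_nonneg _)
    intro n
    have h1 : ∑ t ∈ Finset.range n, ∫ ω, |d t ω| ∂μ
        = 2 * ∑ t ∈ Finset.range n, mt t - ((∫ ω, u n ω ∂μ) - ∫ ω, u 0 ω ∂μ) := by
      calc ∑ t ∈ Finset.range n, ∫ ω, |d t ω| ∂μ
          = ∑ t ∈ Finset.range n, (2 * mt t - ∫ ω, d t ω ∂μ) :=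
            Finset.sum_congr rfl fun t _ => habs_eq t
        _ = 2 * ∑ t ∈ Finset.range n, mt t - ∑ t ∈ Finset.range n, ∫ ω, d t ω ∂μ := by
            rw [Finset.sum_sub_distrib, Finset.mul_sum]
        _ = _ := by
            congr 1
            simp_rw [hdi]
            exact Finset.sum_range_sub (fun t => ∫ ω, u t ω ∂μ) n
    rw [h1]
    have h2 : ∑ t ∈ Finset.range n, mt t ≤ ∑' t, mt t := Summable.sum_le_tsum _ (fun t _ => hmt_nonneg t) hqm
    have h3 : 0 ≤ ∫ ω, u n ω ∂μ := integral_nonneg (hpos n)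
    linarith
  -- a.e. summability of |d t ω|
  have hae_summable : ∀ᵐ ω ∂μ, Summable fun t => |d t ω| := by
    have hmeas : ∀ t, AEMeasurable (fun ω => (‖d t ω‖₊ : ℝ≥0∞)) μ := fun t =>
      (hdint t).aestronglyMeasurable.aemeasurable.nnnorm.coe_nnreal_ennreal
    have hlt : ∫⁻ ω, ∑' t, (‖d t ω‖₊ : ℝ≥0∞) ∂μ < ∞ := by
      rw [lintegral_tsum hmeas]
      have h : ∀ t, ∫⁻ ω, (‖d t ω‖₊ : ℝ≥0∞) ∂μ = ENNReal.ofReal (∫ ω, ‖d t ω‖ ∂μ) :=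
        fun t => (ofReal_integral_norm_eq_lintegral_enorm (hdint t)).symm
      simp_rw [h]
      rw [← ENNReal.ofReal_tsum_of_nonneg (fun t => integral_nonneg fun ω => norm_nonneg _)]
      · exact ENNReal.ofReal_lt_top
      · simpa only [Real.norm_eq_abs] using hIsummable
    filter_upwards [ae_lt_top' (AEMeasurable.ennreal_tsum hmeas) hlt.ne] with ω hω
    have h : Summable fun t => ‖d t ω‖₊ := ENNReal.tsum_coe_ne_top_iff_summable.mp hω.ne
    simpa only [coe_nnnorm, Real.norm_eq_abs] using NNReal.summable_coe.mpr h
  -- the martingale part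
  set A : ℕ → Ω → ℝ := fun t ω => ∑ s ∈ Finset.range t, d s ω with hA
  have hAmeas : ∀ t, StronglyMeasurable[ℱ t] (A (t+1)) := fun t =>
    Finset.stronglyMeasurable_fun_sum _ fun s hs =>
      (hdmeas s).mono (ℱ.mono (Nat.lt_succ_iff.mp (Finset.mem_range.mp hs)))
  have hAmeas' : ∀ t, StronglyMeasurable[ℱ t] (A t) := fun t =>
    Finset.stronglyMeasurable_fun_sum _ fun s hs =>
      (hdmeas s).mono (ℱ.mono (Finset.mem_range.mp hs).le)
  have hAint : ∀ t, Integrable (A t) μ := fun t =>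
    integrable_finset_sum _ fun s _ => hdint s
  set v : ℕ → Ω → ℝ := fun t ω => u t ω - A t ω with hv
  have hvmeas : Adapted ℱ v := fun t => (hadapted t).sub (hAmeas' t).measurable
  have hvint : ∀ t, Integrable (v t) μ := fun t => (hint t).sub (hAint t)
  have hd_eq : ∀ t, d t =ᵐ[μ] fun ω => (μ[u (t+1)|ℱ t]) ω - u t ω := by
    intro t
    refine (condExp_sub (hint (t+1)) (hint t) _).trans ?_
    rw [condExp_of_stronglyMeasurable (ℱ.le t) (hadapted t).stronglyMeasurable (hint t)]
    exact Filter.EventuallyEq.rfl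
  have hmart : Martingale v ℱ μ := by
    apply martingale_nat (fun t => (hvmeas t).stronglyMeasurable) hvint
    intro t
    have e1 : (μ[v (t+1)|ℱ t]) =ᵐ[μ] fun ω => (μ[u (t+1)|ℱ t]) ω - A (t+1) ω := by
      have hveq : v (t+1) = (u (t+1)) - (A (t+1)) := rfl
      rw [hveq]
      refine (condExp_sub (hint (t+1)) (hAint (t+1)) _).trans ?_
      rw [condExp_of_stronglyMeasurable (ℱ.le t) (hAmeas t) (hAint (t+1))]
      exact Filter.EventuallyEq.rfl
    filter_upwards [e1, hd_eq t] with ω h1 h2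
    have hA1 : A (t+1) ω = A t ω + d t ω := Finset.sum_range_succ _ _
    simp only [hv] at *
    rw [h1, hA1]
    have : d t ω = (μ[u (t+1)|ℱ t]) ω - u t ω := h2
    linarith
  -- L¹ boundedness of v
  set C : ℝ := (∫ ω, u 0 ω ∂μ + ∑' t, mt t) + ∑' t, ∫ ω, |d t ω| ∂μ with hC
  have hvbdd : ∀ n, eLpNorm (v n) 1 μ ≤ ‖C‖₊ := by
    intro n
    have h1 : eLpNorm (v n) 1 μ = ENNReal.ofReal (∫ ω, ‖v n ω‖ ∂μ) := by
      rw [eLpNorm_one_eq_lintegral_enorm, ← ofReal_integral_norm_eq_lintegral_enorm (hvint n)]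
    rw [h1]
    refine le_trans (ENNReal.ofReal_le_ofReal ?_) (Real.ofReal_le_enorm C)
    have hun : ∫ ω, u n ω ∂μ ≤ ∫ ω, u 0 ω ∂μ + ∑' t, mt t := by
      have htel : ∫ ω, u n ω ∂μ - ∫ ω, u 0 ω ∂μ
          = ∑ t ∈ Finset.range n, ∫ ω, d t ω ∂μ := by
        simp_rw [hdi]
        exact (Finset.sum_range_sub (fun t => ∫ ω, u t ω ∂μ) n).symm
      have hle : ∑ t ∈ Finset.range n, ∫ ω, d t ω ∂μ ≤ ∑ t ∈ Finset.range n, mt t :=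
        Finset.sum_le_sum fun t _ =>
          integral_mono (hdint t) (hmax_int t) fun ω => le_max_left _ _
      have h2 : ∑ t ∈ Finset.range n, mt t ≤ ∑' t, mt t :=
        Summable.sum_le_tsum _ (fun t _ => hmt_nonneg t) hqm
      linarith
    have hAn : ∫ ω, |A n ω| ∂μ ≤ ∑' t, ∫ ω, |d t ω| ∂μ := by
      have h2 : ∫ ω, |A n ω| ∂μ ≤ ∑ t ∈ Finset.range n, ∫ ω, |d t ω| ∂μ := by
        rw [← integral_finset_sum _ fun t _ => (hdint t).abs]
        refine integral_mono (hAint n).abs (integrable_finset_sum _ fun t _ => (hdint t).abs) ?_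
        intro ω
        exact Finset.abs_sum_le_sum_abs _ _
      exact h2.trans (Summable.sum_le_tsum _ (fun t _ => integral_nonneg fun ω => abs_nonneg _) hIsummable)
    have h3 : ∫ ω, ‖v n ω‖ ∂μ ≤ ∫ ω, (u n ω + |A n ω|) ∂μ := by
      refine integral_mono (hvint n).norm ((hint n).add (hAint n).abs) fun ω => ?_
      simp only [hv, Real.norm_eq_abs]
      calc |u n ω - A n ω| ≤ |u n ω| + |A n ω| := abs_sub _ _
        _ = u n ω + |A n ω| := by rw [abs_of_nonneg (hpos n ω)]
    rw [integral_add (hint n) (hAint n).abs] at h3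
    have : C = (∫ ω, u 0 ω ∂μ + ∑' t, mt t) + ∑' t, ∫ ω, |d t ω| ∂μ := hC
    linarith
  have hvconv := hmart.submartingale.exists_ae_tendsto_of_bdd hvbdd
  -- combine
  filter_upwards [hvconv, hae_summable] with ω hc hsum
  refine ⟨?_, hsum⟩
  obtain ⟨c, hc⟩ := hc
  have hds : Summable fun t => d t ω := hsum.of_abs
  have hA_tendsto : Tendsto (fun n => A n ω) atTop (nhds (∑' t, d t ω)) :=
    hds.hasSum.tendsto_sum_nat
  refine ⟨c + ∑' t, d t ω, ?_⟩
  have : (fun n => u n ω) = fun n => v n ω + A n ω := by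
    funext n; simp [hv]
  rw [this]
  exact hc.add hA_tendsto
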